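/- Let G be a connected, finitely separable graph and let A, B be disjoint, nonempty, finite sets of vertices of G, each inducing a connected subgraph of G. Then G has a finite bond separating A from B: there is a finite set F of edges of G such that A lies in a single component C₁ of G − F, B lies in a single component C₂ of G − F with C₁ ≠ C₂, and F is precisely the set of all edges of G with one endpoint in C₁ and the other endpoint in C₂. -/
import Mathlib

/-- The set of edges of `G` with one endpoint in `A` and the other in `B`. -/
def edgesBetween {V : Type*} (G : SimpleGraph V) (A B : Set V) : Set (Sym2 V) :=
  {e | e ∈ G.edgeSet ∧ ∃ x ∈ A, ∃ y ∈ B, e = s(x, y)}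

/-- A graph is finitely separable if every pair of distinct vertices can be separated by
deleting a finite set of edges. -/
def FinSeparable {V : Type*} (G : SimpleGraph V) : Prop :=
  ∀ x y : V, x ≠ y → ∃ F : Set (Sym2 V), F.Finite ∧ F ⊆ G.edgeSet ∧
    ¬ (G.deleteEdges F).Reachable x y

/-- `C` is (the vertex set of) a connected component of `H`. -/
def IsCompOf {V : Type*} (H : SimpleGraph V) (C : Set V) : Prop :=
  ∃ v, C = {x | H.Reachable v x}

lemma walk_closed {V : Type*} {H : SimpleGraph V} {S : Set V}
    (hS : ∀ ⦃u v⦄, u ∈ S → H.Adj u v → v ∈ S) :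
    ∀ {u v : V}, H.Walk u v → u ∈ S → v ∈ S := by
  intro u v w
  induction w with
  | nil => exact id
  | cons adj _ ih => exact fun hu => ih (hS hu adj)

lemma reach_erase {V : Type*} {G : SimpleGraph V} {F : Set (Sym2 V)} {x y : V} :
    ∀ {u v : V}, (G.deleteEdges (F \ {s(x, y)})).Walk u v →
      (G.deleteEdges F).Reachable u v ∨
      ((G.deleteEdges F).Reachable u x ∧ (G.deleteEdges F).Reachable y v) ∨
      ((G.deleteEdges F).Reachable u y ∧ (G.deleteEdges F).Reachable x v) := by
  intro u v w
  induction w with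
  | nil => exact Or.inl (SimpleGraph.Reachable.refl _)
  | @cons u b v adj w ih =>
    rw [SimpleGraph.deleteEdges_adj] at adj
    obtain ⟨hadj, hne⟩ := adj
    by_cases hF : s(u, b) ∈ F
    · have he : s(u, b) = s(x, y) := by
        by_contra h
        exact hne ⟨hF, h⟩
      rw [Sym2.eq_iff] at he
      rcases he with ⟨hux, hby⟩ | ⟨huy, hbx⟩
      · subst hux; subst hby
        rcases ih with h | ⟨h1, h2⟩ | ⟨h1, h2⟩
        · exact Or.inr (Or.inl ⟨SimpleGraph.Reachable.refl _, h⟩)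
        · exact Or.inr (Or.inl ⟨SimpleGraph.Reachable.refl _, h2⟩)
        · exact Or.inl h2
      · subst huy; subst hbx
        rcases ih with h | ⟨h1, h2⟩ | ⟨h1, h2⟩
        · exact Or.inr (Or.inr ⟨SimpleGraph.Reachable.refl _, h⟩)
        · exact Or.inl h2
        · exact Or.inr (Or.inr ⟨SimpleGraph.Reachable.refl _, h2⟩)
    · have hadj' : (G.deleteEdges F).Adj u b := by
        rw [SimpleGraph.deleteEdges_adj]; exact ⟨hadj, hF⟩
      rcases ih with h | ⟨h1, h2⟩ | ⟨h1, h2⟩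
      · exact Or.inl (hadj'.reachable.trans h)
      · exact Or.inr (Or.inl ⟨hadj'.reachable.trans h1, h2⟩)
      · exact Or.inr (Or.inr ⟨hadj'.reachable.trans h1, h2⟩)

/-- In a connected, finitely separable graph, any two disjoint, nonempty, finite, connected
vertex sets `A`, `B` can be separated by a finite bond. -/
theorem exists_finite_bond_separating {V : Type*} (G : SimpleGraph V) (hG : G.Connected)
    (hsep : FinSeparable G) (A B : Set V)
    (hAfin : A.Finite) (hBfin : B.Finite) (hAne : A.Nonempty) (hBne : B.Nonempty)
    (hdisj : Disjoint A B)
    (hAconn : (G.induce A).Connected) (hBconn : (G.induce B).Connected) :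
    ∃ (F : Set (Sym2 V)) (C₁ C₂ : Set V),
      F.Finite ∧
      IsCompOf (G.deleteEdges F) C₁ ∧ IsCompOf (G.deleteEdges F) C₂ ∧
      A ⊆ C₁ ∧ B ⊆ C₂ ∧ C₁ ≠ C₂ ∧
      F = edgesBetween G C₁ C₂ := by
  classical
  obtain ⟨a₀, ha₀⟩ := hAne
  obtain ⟨b₀, hb₀⟩ := hBne
  -- the key property of a candidate edge set
  set Q : Set (Sym2 V) → Prop := fun F => F ⊆ G.edgeSet ∧
      (∀ a ∈ A, (G.deleteEdges F).Reachable a₀ a) ∧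
      (∀ b ∈ B, (G.deleteEdges F).Reachable b₀ b) ∧
      ¬ (G.deleteEdges F).Reachable a₀ b₀ with hQdef
  -- Step A: existence of a finite candidate
  have key : ∀ a b : V, ∃ F : Set (Sym2 V), F.Finite ∧ F ⊆ G.edgeSet ∧
      (a ∈ A → b ∈ B → ¬ (G.deleteEdges F).Reachable a b) := by
    intro a b
    by_cases h : a ∈ A ∧ b ∈ B
    · have hne : a ≠ b := by
        rintro rfl
        exact (Set.disjoint_left.mp hdisj h.1) h.2
      obtain ⟨F, h1, h2, h3⟩ := hsep a b hne
      exact ⟨F, h1, h2, fun _ _ => h3⟩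
    · exact ⟨∅, Set.finite_empty, Set.empty_subset _, fun ha hb => absurd ⟨ha, hb⟩ h⟩
  choose f hffin hfsub hfnr using key
  set F₀ : Set (Sym2 V) := ⋃ a ∈ A, ⋃ b ∈ B, f a b with hF₀def
  have hF₀fin : F₀.Finite :=
    hAfin.biUnion fun a _ => hBfin.biUnion fun b _ => hffin a b
  have hF₀sub : F₀ ⊆ G.edgeSet := by
    intro e he
    simp only [hF₀def, Set.mem_iUnion] at he
    obtain ⟨a, _, b, _, he⟩ := he
    exact hfsub a b he
  set internal : Set (Sym2 V) :=
    {e | (∃ x ∈ A, ∃ y ∈ A, e = s(x, y)) ∨ (∃ x ∈ B, ∃ y ∈ B, e = s(x, y))} with hintdef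
  set F₁ : Set (Sym2 V) := F₀ \ internal with hF₁def
  have hF₁fin : F₁.Finite := hF₀fin.subset Set.diff_subset
  have hF₁sub : F₁ ⊆ G.edgeSet := Set.diff_subset.trans hF₀sub
  -- all of A is reachable from a₀ in G − F₁
  have hreachA : ∀ a ∈ A, (G.deleteEdges F₁).Reachable a₀ a := by
    intro a ha
    exact SimpleGraph.Reachable.map
      ⟨Subtype.val, fun {u v} huv => by
        rw [SimpleGraph.deleteEdges_adj]
        exact ⟨huv, fun hmem => hmem.2 (Or.inl ⟨u, u.2, v, v.2, rfl⟩)⟩⟩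
      (hAconn.preconnected ⟨a₀, ha₀⟩ ⟨a, ha⟩)
  have hreachB : ∀ b ∈ B, (G.deleteEdges F₁).Reachable b₀ b := by
    intro b hb
    exact SimpleGraph.Reachable.map
      ⟨Subtype.val, fun {u v} huv => by
        rw [SimpleGraph.deleteEdges_adj]
        exact ⟨huv, fun hmem => hmem.2 (Or.inr ⟨u, u.2, v, v.2, rfl⟩)⟩⟩
      (hBconn.preconnected ⟨b₀, hb₀⟩ ⟨b, hb⟩)
  -- a₀ cannot reach b₀ in G − F₁
  have hBnotS : ∀ b ∈ B, ¬ ∃ a ∈ A, (G.deleteEdges F₀).Reachable a b := by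
    rintro b hb ⟨a, ha, hr⟩
    have hsub : f a b ⊆ F₀ := by
      intro e he
      simp only [hF₀def, Set.mem_iUnion]
      exact ⟨a, ha, b, hb, he⟩
    exact hfnr a b ha hb (hr.mono (SimpleGraph.deleteEdges_anti hsub))
  have hnr1 : ¬ (G.deleteEdges F₁).Reachable a₀ b₀ := by
    intro hr
    set S : Set V := {v | ∃ a ∈ A, (G.deleteEdges F₀).Reachable a v} with hSdef
    have hclosed : ∀ ⦃u v⦄, u ∈ S → (G.deleteEdges F₁).Adj u v → v ∈ S := by
      intro u v hu hadj
      rw [SimpleGraph.deleteEdges_adj] at hadj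
      obtain ⟨hadj, hnmem⟩ := hadj
      by_cases hF : s(u, v) ∈ F₀
      · have hint : s(u, v) ∈ internal := by
          by_contra h
          exact hnmem ⟨hF, h⟩
        rcases hint with ⟨x, hx, y, hy, hxy⟩ | ⟨x, hx, y, hy, hxy⟩
        · have hvA : v ∈ A := by
            rw [Sym2.eq_iff] at hxy
            rcases hxy with ⟨rfl, rfl⟩ | ⟨rfl, rfl⟩
            · exact hy
            · exact hx
          exact ⟨v, hvA, SimpleGraph.Reachable.refl _⟩
        · have huB : u ∈ B := by
            rw [Sym2.eq_iff] at hxy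
            rcases hxy with ⟨rfl, rfl⟩ | ⟨rfl, rfl⟩
            · exact hx
            · exact hy
          exact absurd hu (hBnotS u huB)
      · obtain ⟨a, ha, hru⟩ := hu
        have : (G.deleteEdges F₀).Adj u v := by
          rw [SimpleGraph.deleteEdges_adj]; exact ⟨hadj, hF⟩
        exact ⟨a, ha, hru.trans this.reachable⟩
    obtain ⟨w⟩ := hr
    have hb₀S : b₀ ∈ S := walk_closed hclosed w ⟨a₀, ha₀, SimpleGraph.Reachable.refl _⟩
    exact hBnotS b₀ hb₀ hb₀S
  -- package as a Finset
  have hex : ∃ n : ℕ, ∃ F : Finset (Sym2 V), Q ↑F ∧ F.card = n := by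
    refine ⟨hF₁fin.toFinset.card, hF₁fin.toFinset, ?_, rfl⟩
    rw [hQdef]
    rw [Set.Finite.coe_toFinset]
    exact ⟨hF₁sub, hreachA, hreachB, hnr1⟩
  -- Step B: take a minimum-cardinality candidate
  set N := Nat.find hex with hNdef
  obtain ⟨F, hQF, hcard⟩ := Nat.find_spec hex
  obtain ⟨hFsub, hFA, hFB, hFnr⟩ := hQF
  set C₁ : Set V := {x | (G.deleteEdges ↑F).Reachable a₀ x} with hC₁def
  set C₂ : Set V := {x | (G.deleteEdges ↑F).Reachable b₀ x} with hC₂def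
  refine ⟨↑F, C₁, C₂, F.finite_toSet, ⟨a₀, rfl⟩, ⟨b₀, rfl⟩, hFA, hFB, ?_, ?_⟩
  · intro h
    have ha₀ : a₀ ∈ C₁ := SimpleGraph.Reachable.refl _
    rw [h] at ha₀
    exact hFnr ha₀.symm
  · ext e
    constructor
    · intro he
      induction e using Sym2.ind with
      | _ x y =>
        have hes : s(x, y) ∈ G.edgeSet := hFsub he
        by_contra hcon
        have hnot : ¬ ((x ∈ C₁ ∧ y ∈ C₂) ∨ (y ∈ C₁ ∧ x ∈ C₂)) := by
          intro h
          rcases h with ⟨h1, h2⟩ | ⟨h1, h2⟩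
          · exact hcon ⟨hes, x, h1, y, h2, rfl⟩
          · exact hcon ⟨hes, y, h1, x, h2, Sym2.eq_swap⟩
        -- F.erase e is a smaller candidate, contradiction with minimality
        have heF : s(x, y) ∈ F := he
        have hcoe : (↑(F.erase s(x, y)) : Set (Sym2 V)) = ↑F \ {s(x, y)} := by
          simp [Finset.coe_erase]
        have hle : G.deleteEdges ↑F ≤ G.deleteEdges ↑(F.erase s(x, y)) := by
          rw [hcoe]
          exact SimpleGraph.deleteEdges_anti Set.diff_subset
        have hQ' : Q ↑(F.erase s(x, y)) := by
          refine ⟨(Finset.coe_subset.mpr (Finset.erase_subset _ _)).trans hFsub,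
            fun a ha => (hFA a ha).mono hle, fun b hb => (hFB b hb).mono hle, ?_⟩
          intro hr
          rw [hcoe] at hr
          obtain ⟨w⟩ := hr
          rcases reach_erase w with h | ⟨h1, h2⟩ | ⟨h1, h2⟩
          · exact hFnr h
          · exact hnot (Or.inl ⟨h1, h2.symm⟩)
          · exact hnot (Or.inr ⟨h1, h2.symm⟩)
        have hlt : (F.erase s(x, y)).card < Nat.find hex := by
          rw [← hcard]
          exact Finset.card_erase_lt_of_mem heF
        exact Nat.find_min hex hlt ⟨F.erase s(x, y), hQ', rfl⟩
    · rintro ⟨hes, x, hx, y, hy, rfl⟩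
      by_contra hne
      have hadj : (G.deleteEdges ↑F).Adj x y := by
        rw [SimpleGraph.deleteEdges_adj]
        exact ⟨hes, hne⟩
      exact hFnr ((hx.trans hadj.reachable).trans hy.symm)
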